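/- Let G be a bipartite graph and s : E(G) → {−1, +1} a signing of its edges. Then the 2-lift Ĝ_{−s} of G associated to the signing −s has the same adjacency-matrix spectrum (eigenvalues with multiplicities) as the 2-lift Ĝ_s associated to s, and Ĝ_{−s} and Ĝ_s are edge-disjoint. -/

import Mathlib

open MeasureTheory Filter
open scoped ENNReal

noncomputable section
open Classical in
/-- The real adjacency matrix of a simple graph. -/
def adjMatR {V : Type*} [Fintype V] (G : SimpleGraph V) : Matrix V V ℝ :=
  Matrix.of fun a b => if G.Adj a b then 1 else 0


/-- The 2-lift `Ĝ_σ` of a graph `G` associated to a signing `σ` of its (potential) edges: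
its vertex set consists of two copies of `V(G)`, and over each edge `{x,y}` of `G` it has
the two "parallel" edges if `σ{x,y} = 1` and the two "crossing" edges if `σ{x,y} = −1`. -/
def twoLift {V : Type*} (G : SimpleGraph V) (σ : Sym2 V → ℤ) : SimpleGraph (V × Bool) where
  Adj a b := G.Adj a.1 b.1 ∧
    ((σ s(a.1, b.1) = 1 ∧ a.2 = b.2) ∨ (σ s(a.1, b.1) = -1 ∧ a.2 ≠ b.2))
  symm := ⟨by
    rintro ⟨x, i⟩ ⟨y, j⟩ ⟨hadj, h⟩
    refine ⟨hadj.symm, ?_⟩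
    rw [Sym2.eq_swap]
    rcases h with ⟨h1, h2⟩ | ⟨h1, h2⟩
    · exact Or.inl ⟨h1, h2.symm⟩
    · exact Or.inr ⟨h1, Ne.symm h2⟩⟩
  loopless := ⟨by
    rintro ⟨x, i⟩ ⟨hadj, -⟩
    exact G.irrefl hadj⟩

/-- **Lemma 14 of the paper.** If `G` is a bipartite graph and `σ` a signing
of its edges (with values `±1` on edges of `G`), then the 2-lift associated to `−σ` has
the same adjacency-matrix spectrum (eigenvalues with multiplicities, i.e. the same
multiset of roots of the characteristic polynomial) as the 2-lift associated to `σ`, and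
the two lifts are edge-disjoint. -/
theorem stmt_15 {V : Type*} [Fintype V] [DecidableEq V] (G : SimpleGraph V)
    (hbip : ∃ A : Set V, ∀ v w, G.Adj v w → (v ∈ A ↔ w ∉ A))
    (σ : Sym2 V → ℤ) (hσ : ∀ e ∈ G.edgeSet, σ e = 1 ∨ σ e = -1) :
    (adjMatR (twoLift G (-σ))).charpoly.roots = (adjMatR (twoLift G σ)).charpoly.roots ∧
    Disjoint (twoLift G (-σ)).edgeSet (twoLift G σ).edgeSet := by
  classical
  obtain ⟨A, hA⟩ := hbip
  constructor
  · -- spectrum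
    have hinv : Function.Involutive
        (fun p : V × Bool => (p.1, if p.1 ∈ A then p.2 else !p.2)) := by
      rintro ⟨v, i⟩; by_cases h : v ∈ A <;> simp [h]
    set f : (V × Bool) ≃ (V × Bool) := hinv.toPerm _ with hf
    have hadj : ∀ a b, (twoLift G (-σ)).Adj a b ↔ (twoLift G σ).Adj (f a) (f b) := by
      rintro ⟨x, i⟩ ⟨y, j⟩
      show (G.Adj x y ∧ _) ↔ (G.Adj x y ∧ _)
      constructor <;> rintro ⟨h, hs⟩ <;> refine ⟨h, ?_⟩ <;>
        have hxy := hA x y h <;>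
        by_cases hx : x ∈ A
      · have hy : y ∉ A := hxy.mp hx
        simp only [hf, Function.Involutive.coe_toPerm, if_pos hx, if_neg hy,
          Pi.neg_apply] at hs ⊢
        rcases hs with ⟨h1, h2⟩ | ⟨h1, h2⟩ <;> cases i <;> cases j <;> simp_all <;> omega
      · have hy : y ∈ A := by
          by_contra hy; exact hx (hxy.mpr hy)
        simp only [hf, Function.Involutive.coe_toPerm, if_neg hx, if_pos hy,
          Pi.neg_apply] at hs ⊢
        rcases hs with ⟨h1, h2⟩ | ⟨h1, h2⟩ <;> cases i <;> cases j <;> simp_all <;> omega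
      · have hy : y ∉ A := hxy.mp hx
        simp only [hf, Function.Involutive.coe_toPerm, if_pos hx, if_neg hy,
          Pi.neg_apply] at hs ⊢
        rcases hs with ⟨h1, h2⟩ | ⟨h1, h2⟩ <;> cases i <;> cases j <;> simp_all <;> omega
      · have hy : y ∈ A := by
          by_contra hy; exact hx (hxy.mpr hy)
        simp only [hf, Function.Involutive.coe_toPerm, if_neg hx, if_pos hy,
          Pi.neg_apply] at hs ⊢
        rcases hs with ⟨h1, h2⟩ | ⟨h1, h2⟩ <;> cases i <;> cases j <;> simp_all <;> omega
    have hmat : adjMatR (twoLift G (-σ)) =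
        Matrix.reindex f.symm f.symm (adjMatR (twoLift G σ)) := by
      ext a b
      simp only [Matrix.reindex_apply, Matrix.submatrix_apply, Equiv.symm_symm, adjMatR,
        Matrix.of_apply]
      rw [if_congr (hadj a b) rfl rfl]
    rw [hmat, Matrix.charpoly_reindex]
  · -- edge-disjoint
    rw [Set.disjoint_left]
    intro e he1 he2
    induction e with
    | h a b =>
      rw [SimpleGraph.mem_edgeSet] at he1 he2
      obtain ⟨-, hs1⟩ := he1
      obtain ⟨-, hs2⟩ := he2
      simp only [Pi.neg_apply] at hs1
      rcases hs1 with ⟨h1, h2⟩ | ⟨h1, h2⟩ <;> rcases hs2 with ⟨h3, h4⟩ | ⟨h3, h4⟩ <;>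
        first | omega | exact h4 h2 | exact h2 h4

end
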